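/- If T is a rearrangement on symmetrizable functions on ℝⁿ and φ : ℝ → ℝ is right-continuous and increasing, then for every symmetrizable f, the composition φ ∘ f is symmetrizable and φ(Tf) = T(φ ∘ f) almost everywhere. -/

import Mathlib

open MeasureTheory Set

/-- The essential infimum of a real-valued function, computed in `EReal`. -/
noncomputable def essInfE {n : ℕ} (f : EuclideanSpace ℝ (Fin n) → ℝ) : EReal :=
  essInf (fun x => (f x : EReal)) volume

/-- A function `f : ℝⁿ → ℝ` is symmetrizable if it is measurable and every
super-level set `{x | f x > t}` with `t > essinf f` has finite Lebesgue measure. -/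
def Symmetrizable {n : ℕ} (f : EuclideanSpace ℝ (Fin n) → ℝ) : Prop :=
  Measurable f ∧ ∀ t : ℝ, essInfE f < (t : EReal) → volume {x | t < f x} < ⊤

open Filter

section Aux

variable {n : ℕ}

local notation "E" => EuclideanSpace ℝ (Fin n)
local notation "μ" => (volume : Measure (EuclideanSpace ℝ (Fin n)))

lemma aeLe_essInfE (f : E → ℝ) : ∀ᵐ x ∂μ, essInfE f ≤ (f x : EReal) :=
  ae_essInf_le

lemma essInfE_le_of_ae {f : E → ℝ} {c : EReal} (h : ∀ᵐ x ∂μ, (f x : EReal) ≤ c) :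
    essInfE f ≤ c :=
  liminf_le_of_frequently_le' h.frequently

lemma le_essInfE_of_ae {f : E → ℝ} {c : EReal} (h : ∀ᵐ x ∂μ, c ≤ (f x : EReal)) :
    c ≤ essInfE f :=
  le_essInf_of_ae_le c h

lemma symm_finite {f : E → ℝ} (hf : Symmetrizable f) {t : ℝ} (h : essInfE f < (t : EReal)) :
    μ {x | t < f x} ≠ ⊤ :=
  (hf.2 t h).ne

lemma conull_of_lt_essInfE {f : E → ℝ} {t : ℝ} (h : (t : EReal) < essInfE f) :
    ∀ᵐ x ∂μ, t < f x :=
  (aeLe_essInfE f).mono fun x hx => by exact_mod_cast lt_of_lt_of_le h hx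

lemma EReal.le_of_forall_real_lt {a b : EReal}
    (h : ∀ t : ℝ, (t : EReal) < a → (t : EReal) ≤ b) : a ≤ b := by
  by_contra hc
  push_neg at hc
  obtain ⟨y, hy1, hy2⟩ := EReal.exists_between_coe_real hc
  exact absurd (h y hy2) (not_le.mpr hy1)

lemma essInfE_le_of_dist {p q : E → ℝ} (hp : Symmetrizable p) (hq : Symmetrizable q)
    (hd : ∀ t : ℝ, μ {x | t < p x} = μ {x | t < q x}) : essInfE p ≤ essInfE q := by
  apply EReal.le_of_forall_real_lt
  intro t ht
  have h1 : ∀ᵐ x ∂μ, t < p x := conull_of_lt_essInfE ht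
  have hμp : μ {x | t < p x} = μ univ := by
    refine measure_congr ?_
    rw [ae_eq_univ, compl_setOf]
    rw [← ae_iff]
    exact h1
  have hμq : μ {x | t < q x} = μ univ := (hd t).symm.trans hμp
  by_cases htop : μ univ = ⊤
  · by_contra hc
    push_neg at hc
    have hlt : essInfE q < (t : EReal) := hc
    exact absurd (hμq.trans htop) (symm_finite hq hlt)
  · have hcompl : μ {x | t < q x}ᶜ = 0 := by
      have hmeas : MeasurableSet {x | t < q x} := hq.1 measurableSet_Ioi
      rw [measure_compl hmeas (by rw [hμq]; exact htop)]
      rw [hμq]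
      exact tsub_self _
    have haq : ∀ᵐ x ∂μ, t < q x := by
      rw [ae_iff]; simpa [compl_setOf] using hcompl
    exact le_essInfE_of_ae (haq.mono fun x hx => by exact_mod_cast hx.le)


open scoped Classical

/-- A two-valued step function: `R` on `A`, `r` elsewhere. -/
noncomputable def step2 (A : Set (EuclideanSpace ℝ (Fin n))) (r R : ℝ) :
    EuclideanSpace ℝ (Fin n) → ℝ :=
  A.piecewise (fun _ => R) (fun _ => r)

lemma step2_of_mem {A : Set (EuclideanSpace ℝ (Fin n))} {r R : ℝ} {x}
    (hx : x ∈ A) : step2 A r R x = R := Set.piecewise_eq_of_mem _ _ _ hx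

lemma step2_of_not_mem {A : Set (EuclideanSpace ℝ (Fin n))} {r R : ℝ} {x}
    (hx : x ∉ A) : step2 A r R x = r := Set.piecewise_eq_of_notMem _ _ _ hx

lemma step2_level_mid {A : Set (EuclideanSpace ℝ (Fin n))} {r R s : ℝ}
    (hrs : r ≤ s) (hsR : s < R) : {x | s < step2 A r R x} = A := by
  ext x
  simp only [mem_setOf_eq]
  by_cases hx : x ∈ A
  · simp [step2_of_mem hx, hx, hsR]
  · simp [step2_of_not_mem hx, hx, not_lt.mpr hrs]

lemma step2_meas {A : Set (EuclideanSpace ℝ (Fin n))} (hA : MeasurableSet A) (r R : ℝ) :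
    Measurable (step2 A r R) :=
  Measurable.piecewise hA measurable_const measurable_const

lemma step2_le_step2 {A B : Set (EuclideanSpace ℝ (Fin n))} {r r' R R' : ℝ}
    (hAB : A ⊆ B) (hr : r ≤ r') (hrR : r ≤ R') (hR : R ≤ R') :
    step2 A r R ≤ step2 B r' R' := by
  intro x
  by_cases hx : x ∈ A
  · rw [step2_of_mem hx, step2_of_mem (hAB hx)]; exact hR
  · rw [step2_of_not_mem hx]
    by_cases hx' : x ∈ B
    · rw [step2_of_mem hx']; exact hrR
    · rw [step2_of_not_mem hx']; exact hr

lemma step2_symm {A : Set (EuclideanSpace ℝ (Fin n))} {r R : ℝ}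
    (hA : MeasurableSet A) (hAfin : μ A ≠ ⊤) (hrR : r ≤ R) :
    Symmetrizable (step2 A r R) := by
  refine ⟨step2_meas hA r R, ?_⟩
  intro t ht
  rcases le_or_gt r t with hrt | htr
  · have hsub : {x | t < step2 A r R x} ⊆ A := by
      intro x hx
      simp only [mem_setOf_eq] at hx
      by_contra hxA
      rw [step2_of_not_mem hxA] at hx
      exact absurd hx (not_lt.mpr hrt)
    exact lt_of_le_of_lt (measure_mono hsub) hAfin.lt_top
  · exfalso
    have hge : (r : EReal) ≤ essInfE (step2 A r R) := by
      apply le_essInfE_of_ae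
      apply Filter.Eventually.of_forall
      intro x
      by_cases hx : x ∈ A
      · rw [step2_of_mem hx]; exact_mod_cast hrR
      · rw [step2_of_not_mem hx]
    have : (t : EReal) < (r : EReal) := by exact_mod_cast htr
    exact absurd (lt_of_le_of_lt hge ht) (not_lt.mpr this.le)

lemma levelset_subset_ae {p q : EuclideanSpace ℝ (Fin n) → ℝ} (h : p ≤ᵐ[μ] q) (s : ℝ) :
    {x | s < p x} ≤ᵐ[μ] {x | s < q x} := by
  filter_upwards [h] with x hx hsp
  exact lt_of_lt_of_le hsp hx


lemma symm_min {p : EuclideanSpace ℝ (Fin n) → ℝ} (hp : Symmetrizable p) (c : ℝ) :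
    Symmetrizable (fun x => min (p x) c) := by
  refine ⟨hp.1.min measurable_const, ?_⟩
  intro t ht
  by_cases htc : t < c
  · have hset : {x | t < min (p x) c} = {x | t < p x} := by
      ext x; simp [lt_min_iff, htc]
    rw [hset]
    apply hp.2
    by_contra hc
    push_neg at hc
    have : (t : EReal) ≤ essInfE fun x => min (p x) c := by
      apply le_essInfE_of_ae
      filter_upwards [aeLe_essInfE p] with x hx
      have hpx : (t : ℝ) ≤ p x := by exact_mod_cast le_trans hc hx
      have : (t : ℝ) ≤ min (p x) c := le_min hpx htc.le
      exact_mod_cast this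
    exact absurd ht (not_lt.mpr this)
  · have hset : {x | t < min (p x) c} = (∅ : Set (EuclideanSpace ℝ (Fin n))) := by
      ext x
      simp only [mem_setOf_eq, mem_empty_iff_false, iff_false, not_lt]
      exact le_trans (min_le_right _ _) (not_lt.mp htc)
    rw [hset]
    simp

section TLemmas

variable (T : (EuclideanSpace ℝ (Fin n) → ℝ) → (EuclideanSpace ℝ (Fin n) → ℝ))
  (hmap : ∀ f, Symmetrizable f → Symmetrizable (T f))
  (hequi : ∀ f, Symmetrizable f → ∀ t : ℝ,
    volume {x | t < T f x} = volume {x | t < f x})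
  (hmono : ∀ f g, Symmetrizable f → Symmetrizable g →
    f ≤ᵐ[volume] g → T f ≤ᵐ[volume] T g)

include hmap hequi hmono

/-- equal essential infima -/
lemma essInfE_T {g : EuclideanSpace ℝ (Fin n) → ℝ} (hg : Symmetrizable g) :
    essInfE (T g) = essInfE g :=
  le_antisymm (essInfE_le_of_dist (hmap g hg) hg fun t => hequi g hg t)
    (essInfE_le_of_dist hg (hmap g hg) fun t => (hequi g hg t).symm)

/-- monotone level-set inclusion -/
lemma T_level_subset {p q : EuclideanSpace ℝ (Fin n) → ℝ} (hp : Symmetrizable p)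
    (hq : Symmetrizable q) (hle : p ≤ᵐ[μ] q) (s : ℝ) :
    {x | s < T p x} ≤ᵐ[μ] {x | s < T q x} :=
  levelset_subset_ae (hmono p q hp hq hle) s

/-- Lemma E: comparable functions with equal finite measure at a level have
a.e. equal level sets after rearrangement. -/
lemma T_level_ae_eq {p q : EuclideanSpace ℝ (Fin n) → ℝ} (hp : Symmetrizable p)
    (hq : Symmetrizable q) (hle : p ≤ᵐ[μ] q) (s : ℝ)
    (hd : μ {x | s < p x} = μ {x | s < q x}) (hfin : μ {x | s < q x} ≠ ⊤) :
    {x | s < T p x} =ᵐ[μ] {x | s < T q x} := by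
  refine ae_eq_of_ae_subset_of_measure_ge (T_level_subset T hmap hequi hmono hp hq hle s) ?_ ?_ ?_
  · rw [hequi p hp s, hequi q hq s, hd]
  · exact (((hmap p hp).1 measurableSet_Ioi).nullMeasurableSet)
  · rw [hequi q hq s]; exact hfin

/-- different levels of the same function -/
lemma T_levels_ae_eq {p : EuclideanSpace ℝ (Fin n) → ℝ} (hp : Symmetrizable p)
    {s s' : ℝ} (hss : s ≤ s') (hd : μ {x | s < p x} = μ {x | s' < p x})
    (hfin : μ {x | s < p x} ≠ ⊤) :
    {x | s < T p x} =ᵐ[μ] {x | s' < T p x} := by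
  have hsub : {x | s' < T p x} ⊆ {x | s < T p x} := fun x hx => lt_of_le_of_lt hss hx
  refine (ae_eq_of_subset_of_measure_ge hsub ?_ ?_ ?_).symm
  · rw [hequi p hp s, hequi p hp s', hd]
  · exact (((hmap p hp).1 measurableSet_Ioi).nullMeasurableSet)
  · rw [hequi p hp s]; exact hfin

/-- Key lemma F : the rearranged level set equals the rearranged indicator level set. -/
lemma T_keyF {p : EuclideanSpace ℝ (Fin n) → ℝ} (hp : Symmetrizable p) (s : ℝ)
    (hfin : μ {x | s < p x} ≠ ⊤) :
    {x | s < T p x} =ᵐ[μ] {x | s < T (step2 {y | s < p y} s (s + 1)) x} := by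
  set A := {y | s < p y} with hA
  have hAmeas : MeasurableSet A := hp.1 measurableSet_Ioi
  set p₀ := fun x => min (p x) (s + 1) with hp₀
  have hsymp₀ : Symmetrizable p₀ := symm_min hp (s + 1)
  have hlev₀ : {x | s < p₀ x} = A := by
    ext x; simp [hp₀, hA, lt_min_iff, lt_add_one s, mem_setOf_eq]
  have h1 : {x | s < T p₀ x} =ᵐ[μ] {x | s < T p x} := by
    refine T_level_ae_eq T hmap hequi hmono hsymp₀ hp
      (Filter.Eventually.of_forall fun x => min_le_left _ _) s ?_ hfin
    rw [hlev₀]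
  have hstep : Symmetrizable (step2 A s (s + 1)) :=
    step2_symm hAmeas hfin (by linarith)
  have h2 : {x | s < T p₀ x} =ᵐ[μ] {x | s < T (step2 A s (s + 1)) x} := by
    refine T_level_ae_eq T hmap hequi hmono hsymp₀ hstep ?_ s ?_ ?_
    · apply Filter.Eventually.of_forall
      intro x
      by_cases hx : x ∈ A
      · rw [step2_of_mem hx]; exact min_le_right _ _
      · rw [step2_of_not_mem hx]
        exact le_trans (min_le_left _ _) (not_lt.mp hx)
    · rw [hlev₀, step2_level_mid le_rfl (lt_add_one s)]
    · rw [step2_level_mid le_rfl (lt_add_one s)]; exact hfin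
  exact h1.symm.trans h2

/-- Bridge: asymmetric version. -/
lemma T_bridge_le {A : Set (EuclideanSpace ℝ (Fin n))} (hAmeas : MeasurableSet A)
    (hAfin : μ A ≠ ⊤) {b t : ℝ} (hbt : b ≤ t) :
    {x | b < T (step2 A b (b + 1)) x} =ᵐ[μ] {x | t < T (step2 A t (t + 1)) x} := by
  have hsb : Symmetrizable (step2 A b (b + 1)) := step2_symm hAmeas hAfin (by linarith)
  have hst : Symmetrizable (step2 A t (t + 1)) := step2_symm hAmeas hAfin (by linarith)
  have hsV : Symmetrizable (step2 A b (t + 1)) := step2_symm hAmeas hAfin (by linarith)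
  have hbt1 : b < t + 1 := by linarith
  have e1 : {x | b < T (step2 A b (b + 1)) x} =ᵐ[μ] {x | b < T (step2 A b (t + 1)) x} := by
    refine T_level_ae_eq T hmap hequi hmono hsb hsV
      (Filter.Eventually.of_forall (step2_le_step2 le_rfl le_rfl (by linarith) (by linarith))) b ?_ ?_
    · rw [step2_level_mid le_rfl (lt_add_one b), step2_level_mid le_rfl hbt1]
    · rw [step2_level_mid le_rfl hbt1]; exact hAfin
  have e2 : {x | b < T (step2 A b (t + 1)) x} =ᵐ[μ] {x | t < T (step2 A b (t + 1)) x} := by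
    refine T_levels_ae_eq T hmap hequi hmono hsV hbt ?_ ?_
    · rw [step2_level_mid le_rfl hbt1, step2_level_mid hbt (lt_add_one t)]
    · rw [step2_level_mid le_rfl hbt1]; exact hAfin
  have e3 : {x | t < T (step2 A b (t + 1)) x} =ᵐ[μ] {x | t < T (step2 A t (t + 1)) x} := by
    refine T_level_ae_eq T hmap hequi hmono hsV hst
      (Filter.Eventually.of_forall (step2_le_step2 le_rfl hbt (by linarith) le_rfl)) t ?_ ?_
    · rw [step2_level_mid hbt (lt_add_one t), step2_level_mid le_rfl (lt_add_one t)]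
    · rw [step2_level_mid le_rfl (lt_add_one t)]; exact hAfin
  exact (e1.trans e2).trans e3

/-- Bridge between indicator base levels. -/
lemma T_bridge {A : Set (EuclideanSpace ℝ (Fin n))} (hAmeas : MeasurableSet A)
    (hAfin : μ A ≠ ⊤) (b t : ℝ) :
    {x | b < T (step2 A b (b + 1)) x} =ᵐ[μ] {x | t < T (step2 A t (t + 1)) x} := by
  rcases le_total b t with h | h
  · exact T_bridge_le T hmap hequi hmono hAmeas hAfin h
  · exact (T_bridge_le T hmap hequi hmono hAmeas hAfin h).symm


end TLemmas



/-- Structure of superlevel sets of a monotone function. -/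
lemma upper_set_cases (φ : ℝ → ℝ) (hφ : Monotone φ) (t : ℝ) :
    {s : ℝ | t < φ s} = ∅ ∨ {s : ℝ | t < φ s} = univ ∨
      (∃ b, {s : ℝ | t < φ s} = Ioi b) ∨ (∃ b, {s : ℝ | t < φ s} = Ici b) := by
  set U := {s : ℝ | t < φ s} with hU
  by_cases hne : U = ∅
  · exact Or.inl hne
  have hnonempty : U.Nonempty := nonempty_iff_ne_empty.mpr hne
  by_cases hbdd : BddBelow U
  · set b := sInf U with hb
    have hIoi : Ioi b ⊆ U := by
      intro s hs
      obtain ⟨u, huU, hus⟩ := exists_lt_of_csInf_lt hnonempty hs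
      exact lt_of_lt_of_le huU (hφ hus.le)
    have hIci : U ⊆ Ici b := fun s hs => csInf_le hbdd hs
    by_cases hbU : b ∈ U
    · refine Or.inr (Or.inr (Or.inr ⟨b, ?_⟩))
      apply Subset.antisymm hIci
      intro s hs
      rcases eq_or_lt_of_le (mem_Ici.mp hs) with h | h
      · rwa [← h]
      · exact hIoi h
    · refine Or.inr (Or.inr (Or.inl ⟨b, ?_⟩))
      apply Subset.antisymm _ hIoi
      intro s hs
      rcases eq_or_lt_of_le (mem_Ici.mp (hIci hs)) with h | h
      · exact absurd (h ▸ hs) hbU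
      · exact h
  · refine Or.inr (Or.inl ?_)
    apply eq_univ_of_forall
    intro s
    obtain ⟨y, hyU, hys⟩ := (not_bddBelow_iff.mp hbdd) s
    exact lt_of_lt_of_le hyU (hφ hys.le)

/-- Right-continuity: if `φ > t` strictly to the right of `b`, then `φ b ≥ t`. -/
lemma rc_bound {φ : ℝ → ℝ} (hφrc : ∀ a : ℝ, ContinuousWithinAt φ (Ici a) a) {t b : ℝ}
    (h : ∀ s, b < s → t < φ s) : t ≤ φ b := by
  have htend : Filter.Tendsto φ (nhdsWithin b (Ioi b)) (nhds (φ b)) :=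
    (hφrc b).mono_left (nhdsWithin_mono b Ioi_subset_Ici_self)
  exact ge_of_tendsto htend (eventually_nhdsWithin_of_forall fun s hs => (h s hs).le)

/-- Right-continuity along the sequence `b + 1/(k+1)`. -/
lemma rc_seq {φ : ℝ → ℝ} (hφrc : ∀ a : ℝ, ContinuousWithinAt φ (Ici a) a) (b : ℝ) :
    Filter.Tendsto (fun k : ℕ => ((φ (b + 1 / (k + 1)) : ℝ) : EReal)) atTop
      (nhds ((φ b : ℝ) : EReal)) := by
  have h0 : Filter.Tendsto (fun k : ℕ => b + 1 / ((k : ℝ) + 1)) atTop (nhds b) := by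
    have := tendsto_one_div_add_atTop_nhds_zero_nat (𝕜 := ℝ)
    have h1 := this.const_add b
    simpa using h1
  have hmem : ∀ k : ℕ, b + 1 / ((k : ℝ) + 1) ∈ Ici b := by
    intro k
    have h : (0 : ℝ) < 1 / ((k : ℝ) + 1) := by positivity
    simp only [mem_Ici, le_add_iff_nonneg_right]
    exact h.le
  have h2 : Filter.Tendsto (fun k : ℕ => b + 1 / ((k : ℝ) + 1)) atTop
      (nhdsWithin b (Ici b)) :=
    tendsto_nhdsWithin_iff.mpr ⟨h0, Filter.Eventually.of_forall hmem⟩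
  exact (continuous_coe_real_ereal.tendsto _).comp ((hφrc b).tendsto.comp h2)

lemma inter_levels (h : EuclideanSpace ℝ (Fin n) → ℝ) (b : ℝ) (k₀ : ℕ) :
    {x | b ≤ h x} = ⋂ k : ℕ, {x | b - 1 / ((k : ℝ) + (k₀ : ℝ) + 1) < h x} := by
  ext x
  simp only [mem_iInter, mem_setOf_eq]
  constructor
  · intro hx k
    have : (0 : ℝ) < 1 / ((k : ℝ) + (k₀ : ℝ) + 1) := by positivity
    linarith
  · intro hx
    by_contra hc
    push_neg at hc
    obtain ⟨m, hm⟩ := exists_nat_one_div_lt (by linarith : (0 : ℝ) < b - h x)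
    have hle : 1 / ((m : ℝ) + (k₀ : ℝ) + 1) ≤ 1 / ((m : ℝ) + 1) := by
      apply one_div_le_one_div_of_le
      · positivity
      · have : (0 : ℝ) ≤ (k₀ : ℝ) := Nat.cast_nonneg _
        linarith
    have := hx m
    linarith

lemma union_levels (h : EuclideanSpace ℝ (Fin n) → ℝ) (b : ℝ) :
    {x | b < h x} = ⋃ k : ℕ, {x | b + 1 / ((k : ℝ) + 1) < h x} := by
  ext x
  simp only [mem_iUnion, mem_setOf_eq]
  constructor
  · intro hx
    obtain ⟨m, hm⟩ := exists_nat_one_div_lt (by linarith : (0 : ℝ) < h x - b)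
    exact ⟨m, by linarith⟩
  · intro ⟨k, hk⟩
    have : (0 : ℝ) < 1 / ((k : ℝ) + 1) := by positivity
    linarith

/-- Step A: `φ ∘ f` is symmetrizable. -/
lemma symm_comp {φ : ℝ → ℝ} (hφmono : Monotone φ)
    (hφrc : ∀ a : ℝ, ContinuousWithinAt φ (Ici a) a)
    {f : EuclideanSpace ℝ (Fin n) → ℝ} (hf : Symmetrizable f) :
    Symmetrizable (φ ∘ f) := by
  refine ⟨hφmono.measurable.comp hf.1, ?_⟩
  intro t ht
  have hpre : {x | t < (φ ∘ f) x} = f ⁻¹' {s | t < φ s} := rfl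
  rcases upper_set_cases φ hφmono t with hU | hU | ⟨b, hU⟩ | ⟨b, hU⟩
  · rw [hpre, hU]; simp
  · exfalso
    have : (t : EReal) ≤ essInfE (φ ∘ f) := by
      apply le_essInfE_of_ae
      apply Filter.Eventually.of_forall
      intro x
      have : f x ∈ {s : ℝ | t < φ s} := by rw [hU]; trivial
      exact_mod_cast (this : t < φ (f x)).le
    exact absurd ht (not_lt.mpr this)
  · -- U = Ioi b
    rw [hpre, hU]
    by_cases hfb : essInfE f < (b : EReal)
    · exact hf.2 b hfb
    · exfalso
      have hb : (b : EReal) ≤ essInfE f := not_lt.mp hfb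
      have hφb : t ≤ φ b := rc_bound hφrc fun s hs => by
        have : s ∈ {s : ℝ | t < φ s} := by rw [hU]; exact hs
        exact this
      have : (t : EReal) ≤ essInfE (φ ∘ f) := by
        apply le_essInfE_of_ae
        filter_upwards [aeLe_essInfE f] with x hx
        have hbf : (b : ℝ) ≤ f x := by exact_mod_cast le_trans hb hx
        have : t ≤ φ (f x) := le_trans hφb (hφmono hbf)
        exact_mod_cast this
      exact absurd ht (not_lt.mpr this)
  · -- U = Ici b
    rw [hpre, hU]
    by_cases hfb : essInfE f < (b : EReal)
    · obtain ⟨y, hy1, hy2⟩ := EReal.exists_between_coe_real hfb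
      have hsub : f ⁻¹' Ici b ⊆ {x | y < f x} := by
        intro x hx
        have : (y : ℝ) < b := by exact_mod_cast hy2
        exact lt_of_lt_of_le this hx
      exact lt_of_le_of_lt (measure_mono hsub) (hf.2 y hy1)
    · exfalso
      have hb : (b : EReal) ≤ essInfE f := not_lt.mp hfb
      have hφb : t < φ b := by
        have : b ∈ {s : ℝ | t < φ s} := by rw [hU]; exact self_mem_Ici
        exact this
      have : (t : EReal) ≤ essInfE (φ ∘ f) := by
        apply le_essInfE_of_ae
        filter_upwards [aeLe_essInfE f] with x hx
        have hbf : (b : ℝ) ≤ f x := by exact_mod_cast le_trans hb hx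
        have : t ≤ φ (f x) := le_trans hφb.le (hφmono hbf)
        exact_mod_cast this
      exact absurd ht (not_lt.mpr this)


section TKey

variable (T : (EuclideanSpace ℝ (Fin n) → ℝ) → (EuclideanSpace ℝ (Fin n) → ℝ))
  (hmap : ∀ f, Symmetrizable f → Symmetrizable (T f))
  (hequi : ∀ f, Symmetrizable f → ∀ t : ℝ,
    volume {x | t < T f x} = volume {x | t < f x})
  (hmono : ∀ f g, Symmetrizable f → Symmetrizable g →
    f ≤ᵐ[volume] g → T f ≤ᵐ[volume] T g)

include hmap hequi hmono

variable {φ : ℝ → ℝ}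

/-- Core level-set identity above the essential infimum. -/
lemma T_key (hφmono : Monotone φ) (hφrc : ∀ a : ℝ, ContinuousWithinAt φ (Ici a) a)
    {f : EuclideanSpace ℝ (Fin n) → ℝ} (hf : Symmetrizable f)
    (hsymg : Symmetrizable (φ ∘ f)) {q : ℝ} (hq : essInfE (φ ∘ f) < (q : EReal)) :
    {x | q < φ (T f x)} =ᵐ[volume] {x | q < T (φ ∘ f) x} := by
  set g := φ ∘ f with hgdef
  have hμg : volume {x | q < g x} ≠ ⊤ := symm_finite hsymg hq
  rcases upper_set_cases φ hφmono q with hU | hU | ⟨b, hU⟩ | ⟨b, hU⟩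
  · -- U = ∅
    have h2 : {x | q < φ (T f x)} = (∅ : Set (EuclideanSpace ℝ (Fin n))) := by
      ext x
      simp only [mem_setOf_eq, mem_empty_iff_false, iff_false]
      intro hx
      have : T f x ∈ {s : ℝ | q < φ s} := hx
      rw [hU] at this
      exact this
    have h1 : {x | q < g x} = (∅ : Set (EuclideanSpace ℝ (Fin n))) := by
      ext x
      simp only [mem_setOf_eq, mem_empty_iff_false, iff_false]
      intro hx
      have : f x ∈ {s : ℝ | q < φ s} := hx
      rw [hU] at this
      exact this
    rw [h2]
    refine (ae_eq_empty.mpr ?_).symm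
    rw [hequi g hsymg q, h1, measure_empty]
  · -- U = univ
    exfalso
    have : (q : EReal) ≤ essInfE g := by
      apply le_essInfE_of_ae
      apply Filter.Eventually.of_forall
      intro x
      have : f x ∈ {s : ℝ | q < φ s} := by rw [hU]; trivial
      exact_mod_cast (this : q < φ (f x)).le
    exact absurd hq (not_lt.mpr this)
  · -- U = Ioi b
    have hiff : ∀ y : ℝ, q < φ y ↔ b < y := by
      intro y
      rw [show (q < φ y) ↔ y ∈ {s : ℝ | q < φ s} from Iff.rfl, hU]
      exact Iff.rfl
    have hgA : {x | q < g x} = {x | b < f x} := by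
      ext x; exact hiff (f x)
    have hAfin : volume {x | b < f x} ≠ ⊤ := by rw [← hgA]; exact hμg
    have hLHS : {x | q < φ (T f x)} = {x | b < T f x} := by
      ext x; exact hiff (T f x)
    have hAmeas : MeasurableSet {x | b < f x} := hf.1 measurableSet_Ioi
    have e1 : {x | b < T f x} =ᵐ[volume]
        {x | b < T (step2 {y | b < f y} b (b + 1)) x} :=
      T_keyF T hmap hequi hmono hf b hAfin
    have e2 : {x | b < T (step2 {y | b < f y} b (b + 1)) x} =ᵐ[volume]
        {x | q < T (step2 {y | b < f y} q (q + 1)) x} :=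
      T_bridge T hmap hequi hmono hAmeas hAfin b q
    have e3 : {x | q < T g x} =ᵐ[volume]
        {x | q < T (step2 {y | q < g y} q (q + 1)) x} :=
      T_keyF T hmap hequi hmono hsymg q hμg
    rw [hgA] at e3
    rw [hLHS]
    exact (e1.trans e2).trans e3.symm
  · -- U = Ici b
    have hiff : ∀ y : ℝ, q < φ y ↔ b ≤ y := by
      intro y
      rw [show (q < φ y) ↔ y ∈ {s : ℝ | q < φ s} from Iff.rfl, hU]
      exact Iff.rfl
    have hgA : {x | q < g x} = {x | b ≤ f x} := by
      ext x; exact hiff (f x)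
    have hAfin : volume {x | b ≤ f x} ≠ ⊤ := by rw [← hgA]; exact hμg
    have hLHS : {x | q < φ (T f x)} = {x | b ≤ T f x} := by
      ext x; exact hiff (T f x)
    -- find a finite-measure strict superlevel
    have hk₀ : ∃ k₀ : ℕ, volume {x | b - 1 / ((k₀ : ℝ) + 1) < f x} ≠ ⊤ := by
      by_contra hc
      push_neg at hc
      have hble : ∀ k : ℕ, ((b - 1 / ((k : ℝ) + 1) : ℝ) : EReal) ≤ essInfE f := by
        intro k
        by_contra h'
        push_neg at h'
        exact (symm_finite hf h') (hc k)
      have hbf : (b : EReal) ≤ essInfE f := by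
        have h0 : Filter.Tendsto (fun k : ℕ => b - 1 / ((k : ℝ) + 1)) atTop (nhds b) := by
          have := tendsto_one_div_add_atTop_nhds_zero_nat (𝕜 := ℝ)
          have h1 := this.const_sub b
          simpa using h1
        have h2 : Filter.Tendsto (fun k : ℕ => ((b - 1 / ((k : ℝ) + 1) : ℝ) : EReal)) atTop
            (nhds ((b : ℝ) : EReal)) := (continuous_coe_real_ereal.tendsto _).comp h0
        exact le_of_tendsto h2 (Filter.Eventually.of_forall hble)
      have hconull : ∀ᵐ x ∂(volume : Measure (EuclideanSpace ℝ (Fin n))), b ≤ f x := by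
        filter_upwards [aeLe_essInfE f] with x hx
        exact_mod_cast le_trans hbf hx
      have hμA : volume {x | b ≤ f x} = volume (univ : Set (EuclideanSpace ℝ (Fin n))) := by
        refine measure_congr ?_
        rw [ae_eq_univ, compl_setOf, ← ae_iff]
        exact hconull
      have huniv : volume (univ : Set (EuclideanSpace ℝ (Fin n))) ≠ ⊤ := by
        rw [← hμA]; exact hAfin
      exact absurd (hc 0) (by
        intro h0
        exact huniv (top_le_iff.mp (h0 ▸ measure_mono (subset_univ _))))
    obtain ⟨k₀, hk₀⟩ := hk₀
    set tk : ℕ → ℝ := fun k => b - 1 / ((k : ℝ) + (k₀ : ℝ) + 1) with htk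
    have htk_lt : ∀ k, tk k < b := by
      intro k
      have : (0 : ℝ) < 1 / ((k : ℝ) + (k₀ : ℝ) + 1) := by positivity
      simp only [htk]
      linarith
    have htk_mono : Monotone tk := by
      intro j k hjk
      simp only [htk]
      have h1 : (0:ℝ) < (j : ℝ) + (k₀ : ℝ) + 1 := by positivity
      have h2 : (j : ℝ) + (k₀ : ℝ) + 1 ≤ (k : ℝ) + (k₀ : ℝ) + 1 := by
        have : (j : ℝ) ≤ (k : ℝ) := Nat.cast_le.mpr hjk
        linarith
      have := one_div_le_one_div_of_le h1 h2
      linarith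
    have hAk_fin : ∀ k, volume {x | tk k < f x} ≠ ⊤ := by
      intro k
      have hsub : {x | tk k < f x} ⊆ {x | b - 1 / ((k₀ : ℝ) + 1) < f x} := by
        intro x hx
        have h0 : tk 0 ≤ tk k := htk_mono (Nat.zero_le k)
        have h00 : tk 0 = b - 1 / ((k₀ : ℝ) + 1) := by simp [htk]
        have : b - 1 / ((k₀ : ℝ) + 1) ≤ tk k := h00 ▸ h0
        exact lt_of_le_of_lt this hx
      intro htop
      exact hk₀ (top_le_iff.mp (htop ▸ measure_mono hsub))
    have hAk_meas : ∀ k, MeasurableSet {x | tk k < f x} := fun k => hf.1 measurableSet_Ioi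
    have hAk_anti : Antitone fun k => {x | tk k < f x} := by
      intro j k hjk x hx
      exact lt_of_le_of_lt (htk_mono hjk) hx
    have hInterA : {x | b ≤ f x} = ⋂ k : ℕ, {x | tk k < f x} := inter_levels f b k₀
    have hInterD : {x | b ≤ T f x} = ⋂ k : ℕ, {x | tk k < T f x} := inter_levels (T f) b k₀
    -- the common indicator target
    have hAsub : ∀ k, {x | b ≤ f x} ⊆ {x | tk k < f x} := by
      intro k x hx
      exact lt_of_lt_of_le (htk_lt k) hx
    have hAmeas : MeasurableSet {x | b ≤ f x} := hf.1 measurableSet_Ici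
    have hsymSA : Symmetrizable (step2 {x | b ≤ f x} q (q + 1)) :=
      step2_symm hAmeas hAfin (by linarith)
    have hsymS' : ∀ k, Symmetrizable (step2 {x | tk k < f x} q (q + 1)) := fun k =>
      step2_symm (hAk_meas k) (hAk_fin k) (by linarith)
    have eg : {x | q < T g x} =ᵐ[volume]
        {x | q < T (step2 {x | b ≤ f x} q (q + 1)) x} := by
      have := T_keyF T hmap hequi hmono hsymg q hμg
      rwa [hgA] at this
    have hd : ∀ k, {x | tk k < T f x} =ᵐ[volume]
        {x | q < T (step2 {x | tk k < f x} q (q + 1)) x} := by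
      intro k
      have e1 := T_keyF T hmap hequi hmono hf (tk k) (hAk_fin k)
      have e2 := T_bridge T hmap hequi hmono (hAk_meas k) (hAk_fin k) (tk k) q
      exact e1.trans e2
    have hsubk : ∀ k, {x | q < T (step2 {x | b ≤ f x} q (q + 1)) x} ≤ᵐ[volume]
        {x | q < T (step2 {x | tk k < f x} q (q + 1)) x} := by
      intro k
      refine T_level_subset T hmap hequi hmono hsymSA (hsymS' k) ?_ q
      exact Filter.Eventually.of_forall
        (step2_le_step2 (hAsub k) le_rfl (by linarith) le_rfl)
    have hSAsub : {x | q < T (step2 {x | b ≤ f x} q (q + 1)) x} ≤ᵐ[volume]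
        ⋂ k : ℕ, {x | tk k < T f x} := by
      have hall : ∀ᵐ x ∂(volume : Measure (EuclideanSpace ℝ (Fin n))),
          ∀ k : ℕ, x ∈ {x | q < T (step2 {x | b ≤ f x} q (q + 1)) x} →
            x ∈ {x | tk k < T f x} := by
        rw [ae_all_iff]
        intro k
        exact (hsubk k).trans (hd k).symm.le
      filter_upwards [hall] with x hx hmem
      exact mem_iInter.mpr fun k => hx k hmem
    have hμSA : volume {x | q < T (step2 {x | b ≤ f x} q (q + 1)) x} = volume {x | b ≤ f x} := by
      rw [hequi _ hsymSA q, step2_level_mid le_rfl (lt_add_one q)]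
    have hμD : volume (⋂ k : ℕ, {x | tk k < T f x}) ≤ volume {x | b ≤ f x} := by
      have h1 : volume (⋂ k : ℕ, {x | tk k < T f x}) ≤ ⨅ k : ℕ, volume {x | tk k < f x} := by
        refine le_iInf fun k => ?_
        rw [← hequi f hf (tk k)]
        exact measure_mono (iInter_subset _ k)
      rw [hInterA]
      rw [Antitone.measure_iInter hAk_anti (fun k => (hAk_meas k).nullMeasurableSet)
        ⟨0, hAk_fin 0⟩]
      exact h1
    have hfinD : volume (⋂ k : ℕ, {x | tk k < T f x}) ≠ ⊤ := by
      intro htop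
      exact hAfin (top_le_iff.mp (htop ▸ hμD))
    have hmain : {x | q < T (step2 {x | b ≤ f x} q (q + 1)) x} =ᵐ[volume]
        ⋂ k : ℕ, {x | tk k < T f x} := by
      refine ae_eq_of_ae_subset_of_measure_ge hSAsub ?_ ?_ hfinD
      · rw [hμSA]; exact hμD
      · exact ((hmap _ hsymSA).1 measurableSet_Ioi).nullMeasurableSet
    rw [hLHS, hInterD]
    exact hmain.symm.trans eg.symm


/-- Below the essential infimum both level sets are conull. -/
lemma T_low (hφmono : Monotone φ) (hφrc : ∀ a : ℝ, ContinuousWithinAt φ (Ici a) a)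
    {f : EuclideanSpace ℝ (Fin n) → ℝ} (hf : Symmetrizable f)
    (hsymg : Symmetrizable (φ ∘ f)) {q : ℝ} (hq : (q : EReal) < essInfE (φ ∘ f)) :
    {x | q < φ (T f x)} =ᵐ[volume] {x | q < T (φ ∘ f) x} := by
  set g := φ ∘ f with hgdef
  have hessTf : essInfE (T f) = essInfE f := essInfE_T T hmap hequi hmono hf
  have hessTg : essInfE (T g) = essInfE g := essInfE_T T hmap hequi hmono hsymg
  have conull_v : ∀ᵐ x ∂(volume : Measure (EuclideanSpace ℝ (Fin n))), q < T g x :=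
    conull_of_lt_essInfE (by rw [hessTg]; exact hq)
  have conull_u : ∀ᵐ x ∂(volume : Measure (EuclideanSpace ℝ (Fin n))), q < φ (T f x) := by
    rcases upper_set_cases φ hφmono q with hU | hU | ⟨b, hU⟩ | ⟨b, hU⟩
    · exfalso
      obtain ⟨x, hx⟩ := (conull_of_lt_essInfE hq).exists
      have : f x ∈ {s : ℝ | q < φ s} := hx
      rw [hU] at this
      exact this
    · apply Filter.Eventually.of_forall
      intro x
      have : T f x ∈ {s : ℝ | q < φ s} := by rw [hU]; trivial
      exact this
    · -- U = Ioi b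
      have hb : (b : EReal) < essInfE f := by
        by_contra h'
        push_neg at h'
        have hseq : ∀ k : ℕ, essInfE g ≤ ((φ (b + 1 / ((k : ℝ) + 1)) : ℝ) : EReal) := by
          intro k
          set ε := 1 / ((k : ℝ) + 1) with hε
          have hεpos : (0 : ℝ) < ε := by positivity
          by_contra h''
          push_neg at h''
          have hgae : ∀ᵐ x ∂(volume : Measure (EuclideanSpace ℝ (Fin n))),
              φ (b + ε) < g x := conull_of_lt_essInfE h''
          have hpos : volume {x | f x < b + ε} ≠ 0 := by
            intro h0
            have hge : ∀ᵐ x ∂(volume : Measure (EuclideanSpace ℝ (Fin n))), b + ε ≤ f x := by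
              rw [ae_iff]
              have : {x : EuclideanSpace ℝ (Fin n) | ¬ b + ε ≤ f x} = {x | f x < b + ε} := by
                ext x; simp [not_le]
              rw [this]
              exact h0
            have : ((b + ε : ℝ) : EReal) ≤ essInfE f :=
              le_essInfE_of_ae (hge.mono fun x hx => by exact_mod_cast hx)
            have hcontra : ((b + ε : ℝ) : EReal) ≤ (b : EReal) := le_trans this h'
            have : b + ε ≤ b := by exact_mod_cast hcontra
            linarith
          have hfreq : ∃ᵐ x ∂(volume : Measure (EuclideanSpace ℝ (Fin n))),
              x ∈ {x | f x < b + ε} := frequently_ae_mem_iff.mpr hpos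
          obtain ⟨x, hx1, hx2⟩ := (hfreq.and_eventually hgae).exists
          have : g x ≤ φ (b + ε) := hφmono (le_of_lt hx1)
          exact absurd hx2 (not_lt.mpr this)
        have hlim := rc_seq hφrc b
        have hgb : essInfE g ≤ ((φ b : ℝ) : EReal) :=
          ge_of_tendsto hlim (Filter.Eventually.of_forall hseq)
        have hφbq : φ b ≤ q := by
          by_contra hqb
          push_neg at hqb
          have : b ∈ {s : ℝ | q < φ s} := hqb
          rw [hU] at this
          exact lt_irrefl b this
        have : essInfE g ≤ (q : EReal) := le_trans hgb (by exact_mod_cast hφbq)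
        exact absurd hq (not_lt.mpr this)
      filter_upwards [aeLe_essInfE (T f)] with x hx
      have : (b : EReal) < (T f x : EReal) := lt_of_lt_of_le (hessTf ▸ hb) hx
      have hbx : b < T f x := by exact_mod_cast this
      have : T f x ∈ {s : ℝ | q < φ s} := by rw [hU]; exact hbx
      exact this
    · -- U = Ici b
      have hb : (b : EReal) ≤ essInfE f := by
        apply le_essInfE_of_ae
        filter_upwards [conull_of_lt_essInfE hq] with x hx
        have : f x ∈ {s : ℝ | q < φ s} := hx
        rw [hU] at this
        exact_mod_cast (this : b ≤ f x)
      filter_upwards [aeLe_essInfE (T f)] with x hx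
      have : (b : EReal) ≤ (T f x : EReal) := le_trans (hessTf ▸ hb) hx
      have hbx : b ≤ T f x := by exact_mod_cast this
      have : T f x ∈ {s : ℝ | q < φ s} := by rw [hU]; exact hbx
      exact this
  rw [eventuallyEq_set]
  filter_upwards [conull_u, conull_v] with x h1 h2
  exact iff_of_true h1 h2

end TKey

end Aux

theorem stmt_6 {n : ℕ}
    (T : (EuclideanSpace ℝ (Fin n) → ℝ) → (EuclideanSpace ℝ (Fin n) → ℝ))
    (hmap : ∀ f, Symmetrizable f → Symmetrizable (T f))
    (hequi : ∀ f, Symmetrizable f → ∀ t : ℝ,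
      volume {x | t < T f x} = volume {x | t < f x})
    (hmono : ∀ f g, Symmetrizable f → Symmetrizable g →
      f ≤ᵐ[volume] g → T f ≤ᵐ[volume] T g)
    (φ : ℝ → ℝ) (hφmono : Monotone φ)
    (hφrc : ∀ a : ℝ, ContinuousWithinAt φ (Ici a) a)
    (f : EuclideanSpace ℝ (Fin n) → ℝ) (hf : Symmetrizable f) :
    Symmetrizable (φ ∘ f) ∧ (fun x => φ (T f x)) =ᵐ[volume] T (φ ∘ f) := by
  have hsymg : Symmetrizable (φ ∘ f) := symm_comp hφmono hφrc hf
  refine ⟨hsymg, ?_⟩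
  have hQ : ∀ r : ℚ, {x | (r : ℝ) < φ (T f x)} =ᵐ[volume] {x | (r : ℝ) < T (φ ∘ f) x} := by
    intro r
    rcases lt_trichotomy (essInfE (φ ∘ f)) (((r : ℝ) : EReal)) with h | h | h
    · exact T_key T hmap hequi hmono hφmono hφrc hf hsymg h
    · -- boundary level: write as countable union of higher levels
      have h1 := union_levels (fun x => φ (T f x)) (r : ℝ)
      have h2 := union_levels (T (φ ∘ f)) (r : ℝ)
      rw [h1, h2]
      have hk : ∀ k : ℕ, {x | (r : ℝ) + 1 / ((k : ℝ) + 1) < φ (T f x)} =ᵐ[volume]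
          {x | (r : ℝ) + 1 / ((k : ℝ) + 1) < T (φ ∘ f) x} := by
        intro k
        refine T_key T hmap hequi hmono hφmono hφrc hf hsymg ?_
        rw [h]
        have hpos : (0 : ℝ) < 1 / ((k : ℝ) + 1) := by positivity
        have : ((r : ℝ) : EReal) < (((r : ℝ) + 1 / ((k : ℝ) + 1) : ℝ) : EReal) := by
          exact_mod_cast (by linarith : (r : ℝ) < (r : ℝ) + 1 / ((k : ℝ) + 1))
        exact this
      rw [eventuallyEq_set]
      have hall := ae_all_iff.2 fun k : ℕ => eventuallyEq_set.mp (hk k)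
      filter_upwards [hall] with x hx
      simp only [mem_iUnion, mem_setOf_eq]
      constructor
      · rintro ⟨k, hk'⟩
        exact ⟨k, (hx k).mp hk'⟩
      · rintro ⟨k, hk'⟩
        exact ⟨k, (hx k).mpr hk'⟩
    · exact T_low T hmap hequi hmono hφmono hφrc hf hsymg h
  have hall := ae_all_iff.2 fun r : ℚ => eventuallyEq_set.mp (hQ r)
  filter_upwards [hall] with x hx
  show φ (T f x) = T (φ ∘ f) x
  by_contra hne
  rcases lt_or_gt_of_ne hne with hlt | hgt
  · obtain ⟨r, hr1, hr2⟩ := exists_rat_btwn hlt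
    exact absurd ((hx r).mpr hr2) (not_lt.mpr hr1.le)
  · obtain ⟨r, hr1, hr2⟩ := exists_rat_btwn hgt
    exact absurd ((hx r).mp hr2) (not_lt.mpr hr1.le)
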